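/- Assume additionally that a_1,…,a_m and b_1,…,b_m are positive integers. For j = 1,…,m set c_j = a_1·a_2⋯a_{j−1}·b_j·b_{j+1}⋯b_{m−1} (empty products equal 1), and let N = lcm(c_1,…,c_m). Then the maximum of L(t) over all t ∈ P equals N·(1/c_1 + 1/c_2 + ⋯ + 1/c_m) − m, and this maximum is attained at t = (a_1 − 1, a_2 − 1, …, a_m − 1). -/

import Mathlib

open scoped BigOperators

/-- One step `s → s'` of the continuous O'Hara algorithm on `ℝ^m`:
for some index `j` with `s_j ≥ b_j`, subtract `b_j` from the `j`-th
coordinate and add `a_{j-1}` to the `(j-1)`-st coordinate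
(indices cyclically modulo `m`). -/
def CStep (m : ℕ) [NeZero m] (a b : Fin m → ℝ) (s s' : Fin m → ℝ) : Prop :=
  ∃ j : Fin m, b j ≤ s j ∧
    ∀ l, s' l = s l + (if l = j - 1 then a (j - 1) else 0)
                    - (if l = j then b j else 0)

/-- Membership in the half-open box `[0,a_1) × ⋯ × [0,a_m)`. -/
def InBox {m : ℕ} (a : Fin m → ℝ) (t : Fin m → ℝ) : Prop :=
  ∀ j, 0 ≤ t j ∧ t j < a j

/-- `c_j = a_1·a_2⋯a_{j-1} · b_j·b_{j+1}⋯b_{m-1}` (1-based subscripts;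
here `Fin m` is 0-based, so the first factor runs over indices `< j` and the
second over indices `u` with `j ≤ u < m - 1`; empty products equal `1`). -/
def cProd (m : ℕ) (A B : Fin m → ℕ) (j : Fin m) : ℕ :=
  (∏ u ∈ Finset.univ.filter (fun u : Fin m => (u : ℕ) < (j : ℕ)), A u) *
  (∏ u ∈ Finset.univ.filter
      (fun u : Fin m => (j : ℕ) ≤ (u : ℕ) ∧ (u : ℕ) < m - 1), B u)

lemma cProd_pos {m : ℕ} (A B : Fin m → ℕ) (hA : ∀ j, 0 < A j) (hB : ∀ j, 0 < B j)
    (j : Fin m) : 0 < cProd m A B j := by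
  unfold cProd
  exact Nat.mul_pos (Finset.prod_pos fun u _ => hA u) (Finset.prod_pos fun u _ => hB u)

lemma key_identity {m : ℕ} [NeZero m] (A B : Fin m → ℕ)
    (hprod : ∏ j, A j = ∏ j, B j) (j : Fin m) :
    A j * cProd m A B j = B j * cProd m A B (j + 1) := by
  have hm : 0 < m := Nat.pos_of_ne_zero (NeZero.ne m)
  by_cases hj : (j : ℕ) + 1 < m
  · have hj1 : ((j + 1 : Fin m) : ℕ) = (j : ℕ) + 1 := by
      have hm2 : 2 ≤ m := by omega
      rw [Fin.val_add, Fin.val_one', Nat.mod_eq_of_lt hm2, Nat.mod_eq_of_lt hj]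
    have e1 : Finset.univ.filter (fun u : Fin m => (u : ℕ) < (j : ℕ) + 1)
        = insert j (Finset.univ.filter (fun u : Fin m => (u : ℕ) < (j : ℕ))) := by
      ext u; have hu := u.isLt
      simp only [Finset.mem_filter, Finset.mem_insert, Finset.mem_univ, true_and, Fin.ext_iff]
      omega
    have e2 : Finset.univ.filter (fun u : Fin m => (j : ℕ) ≤ (u : ℕ) ∧ (u : ℕ) < m - 1)
        = insert j (Finset.univ.filter
            (fun u : Fin m => (j : ℕ) + 1 ≤ (u : ℕ) ∧ (u : ℕ) < m - 1)) := by
      ext u; have hu := u.isLt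
      simp only [Finset.mem_filter, Finset.mem_insert, Finset.mem_univ, true_and, Fin.ext_iff]
      omega
    unfold cProd
    rw [hj1, e1, e2, Finset.prod_insert (by simp), Finset.prod_insert (by simp)]
    ring
  · have hjm : (j : ℕ) = m - 1 := by have := j.isLt; omega
    have hj1 : ((j + 1 : Fin m) : ℕ) = 0 := by
      rw [Fin.val_add, Fin.val_one']
      rcases eq_or_ne m 1 with h | h
      · subst h; omega
      · have hm2 : 2 ≤ m := by omega
        rw [Nat.mod_eq_of_lt hm2]
        have hjm' : (j : ℕ) + 1 = m := by omega
        rw [hjm', Nat.mod_self]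
    have e1 : Finset.univ.filter (fun u : Fin m => (u : ℕ) < (j : ℕ))
        = Finset.univ.erase j := by
      ext u; have hu := u.isLt
      simp only [Finset.mem_filter, Finset.mem_erase, Finset.mem_univ, true_and, and_true,
        Fin.ext_iff]
      omega
    have e2 : Finset.univ.filter
        (fun u : Fin m => (j : ℕ) ≤ (u : ℕ) ∧ (u : ℕ) < m - 1) = (∅ : Finset (Fin m)) := by
      ext u; have hu := u.isLt
      simp only [Finset.mem_filter, Finset.notMem_empty, iff_false, Finset.mem_univ, true_and,
        not_and]
      omega
    have e3 : Finset.univ.filter (fun u : Fin m => (u : ℕ) < ((j + 1 : Fin m) : ℕ))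
        = (∅ : Finset (Fin m)) := by
      ext u
      simp only [Finset.mem_filter, Finset.notMem_empty, iff_false, Finset.mem_univ, true_and]
      omega
    have e4 : Finset.univ.filter
        (fun u : Fin m => ((j + 1 : Fin m) : ℕ) ≤ (u : ℕ) ∧ (u : ℕ) < m - 1)
        = Finset.univ.erase j := by
      ext u; have hu := u.isLt
      simp only [Finset.mem_filter, Finset.mem_erase, Finset.mem_univ, true_and, and_true,
        Fin.ext_iff, hj1]
      omega
    unfold cProd
    rw [e1, e2, e3, e4, Finset.prod_empty, Finset.prod_empty, mul_one, one_mul,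
      Finset.mul_prod_erase _ _ (Finset.mem_univ j), Finset.mul_prod_erase _ _ (Finset.mem_univ j),
      hprod]

section
variable {m : ℕ} [NeZero m] (A B : Fin m → ℕ)

lemma prod_A_eq_prod_B (i : Fin m → ℝ) (hi : ∀ j, 0 < i j)
    (hiab : ∀ j, i j * (A j : ℝ) = i (j + 1) * (B (j + 1) : ℝ)) :
    ∏ j, A j = ∏ j, B j := by
  have h1 : ∏ j, (i j * (A j : ℝ)) = ∏ j, (i (j + 1) * (B (j + 1) : ℝ)) :=
    Finset.prod_congr rfl fun j _ => hiab j
  have h2 : ∏ j : Fin m, (i (j + 1) * (B (j + 1) : ℝ)) = ∏ j : Fin m, (i j * (B j : ℝ)) :=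
    Fintype.prod_equiv (Equiv.addRight (1 : Fin m)) _ _ fun j => rfl
  rw [h2, Finset.prod_mul_distrib, Finset.prod_mul_distrib] at h1
  have hip : (0 : ℝ) < ∏ j, i j := Finset.prod_pos fun j _ => hi j
  have h3 : (∏ j, (A j : ℝ)) = ∏ j, (B j : ℝ) := mul_left_cancel₀ (ne_of_gt hip) h1
  have h4 : ((∏ j, A j : ℕ) : ℝ) = ((∏ j, B j : ℕ) : ℝ) := by push_cast; exact h3
  exact_mod_cast h4

lemma N_pos (hA : ∀ j, 0 < A j) (hB : ∀ j, 0 < B j) :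
    0 < Finset.univ.lcm (cProd m A B) := by
  rcases Nat.eq_zero_or_pos (Finset.univ.lcm (cProd m A B)) with h | h
  · exfalso
    rw [Finset.lcm_eq_zero_iff] at h
    obtain ⟨j, -, hj⟩ := h
    exact (cProd_pos A B hA hB j).ne' hj
  · exact h

lemma div_identity (hA : ∀ j, 0 < A j) (hB : ∀ j, 0 < B j)
    (hprod : ∏ j, A j = ∏ j, B j) (j : Fin m) :
    (Finset.univ.lcm (cProd m A B) / cProd m A B (j + 1)) * A j
      = (Finset.univ.lcm (cProd m A B) / cProd m A B j) * B j := by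
  set c := cProd m A B with hc
  set N := Finset.univ.lcm c with hN
  have hd1 : c (j + 1) ∣ N := Finset.dvd_lcm (Finset.mem_univ _)
  have hd2 : c j ∣ N := Finset.dvd_lcm (Finset.mem_univ _)
  have hcpos : ∀ u, 0 < c u := cProd_pos A B hA hB
  have key := key_identity A B hprod j
  have h : (N / c (j + 1) * A j) * (c j * c (j + 1))
      = (N / c j * B j) * (c j * c (j + 1)) := by
    calc (N / c (j + 1) * A j) * (c j * c (j + 1))
        = (N / c (j + 1) * c (j + 1)) * (A j * c j) := by ring
      _ = N * (B j * c (j + 1)) := by rw [Nat.div_mul_cancel hd1, key]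
      _ = (N / c j * c j) * (B j * c (j + 1)) := by rw [Nat.div_mul_cancel hd2]
      _ = (N / c j * B j) * (c j * c (j + 1)) := by ring
  exact Nat.eq_of_mul_eq_mul_right (Nat.mul_pos (hcpos j) (hcpos (j + 1))) h

end
section
variable {m : ℕ} [NeZero m] (A B : Fin m → ℕ) (t : Fin m → ℝ)

/-- One round of the greedy count iteration. -/
noncomputable def Fstep (n : Fin m → ℕ) (j : Fin m) : ℕ :=
  ⌊(t j + (n (j + 1) : ℝ) * (A j : ℝ)) / (B j : ℝ)⌋₊

lemma Fstep_mono (hA : ∀ j, 0 < A j) (hB : ∀ j, 0 < B j) {n n' : Fin m → ℕ}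
    (h : ∀ j, n j ≤ n' j) (j : Fin m) : Fstep A B t n j ≤ Fstep A B t n' j := by
  apply Nat.floor_le_floor
  have hBj : (0 : ℝ) < B j := by exact_mod_cast hB j
  have hAj : (0 : ℝ) ≤ A j := by positivity
  gcongr
  exact_mod_cast h (j + 1)

lemma Fstep_bound (hA : ∀ j, 0 < A j) (hB : ∀ j, 0 < B j)
    (hprod : ∏ j, A j = ∏ j, B j)
    (ht0 : ∀ j, 0 ≤ t j) (ht1 : ∀ j, t j < A j) {n : Fin m → ℕ}
    (hb : ∀ j, n j + 1 ≤ Finset.univ.lcm (cProd m A B) / cProd m A B j) (j : Fin m) :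
    Fstep A B t n j + 1 ≤ Finset.univ.lcm (cProd m A B) / cProd m A B j := by
  unfold Fstep
  set c := cProd m A B
  set N := Finset.univ.lcm c
  have hBj : (0 : ℝ) < B j := by exact_mod_cast hB j
  have hx0 : (0 : ℝ) ≤ (t j + (n (j + 1) : ℝ) * (A j : ℝ)) / (B j : ℝ) :=
    div_nonneg (add_nonneg (ht0 j) (by positivity)) hBj.le
  have hkey : ((N / c j : ℕ) : ℝ) * (B j : ℝ) = ((n (j + 1) : ℝ) + 1) * (A j : ℝ) +
      ((N / c (j + 1) - (n (j + 1) + 1) : ℕ) : ℝ) * (A j : ℝ) := by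
    have h1 : (N / c (j + 1)) * A j = (N / c j) * B j := div_identity A B hA hB hprod j
    have h2 : n (j + 1) + 1 ≤ N / c (j + 1) := hb (j + 1)
    have h3 : (n (j + 1) + 1) * A j + (N / c (j + 1) - (n (j + 1) + 1)) * A j
        = (N / c j) * B j := by
      rw [← Nat.add_mul, Nat.add_sub_cancel' h2, h1]
    exact_mod_cast congrArg (fun x : ℕ => (x : ℝ)) h3.symm
  have hlt : (t j + (n (j + 1) : ℝ) * (A j : ℝ)) / (B j : ℝ) < ((N / c j : ℕ) : ℝ) := by
    rw [div_lt_iff₀ hBj, hkey]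
    have hterm : (0 : ℝ) ≤ ((N / c (j + 1) - (n (j + 1) + 1) : ℕ) : ℝ) * (A j : ℝ) :=
      mul_nonneg (Nat.cast_nonneg _) (Nat.cast_nonneg _)
    linarith [ht1 j]
  have := (Nat.floor_lt hx0).mpr hlt
  omega

end
section
variable {m : ℕ} [NeZero m] (A B : Fin m → ℕ) (t : Fin m → ℝ)

lemma exists_fix (hA : ∀ j, 0 < A j) (hB : ∀ j, 0 < B j)
    (hprod : ∏ j, A j = ∏ j, B j)
    (ht0 : ∀ j, 0 ≤ t j) (ht1 : ∀ j, t j < A j) :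
    ∃ n : Fin m → ℕ,
      Fstep A B t n = n ∧
      (∀ j, n j + 1 ≤ Finset.univ.lcm (cProd m A B) / cProd m A B j) ∧
      (∀ cnt : Fin m → ℕ, (∀ j, cnt j ≤ n j) → cnt ≠ n →
        ∃ j, cnt j < n j ∧ ((cnt j : ℝ) + 1) * B j ≤ t j + (cnt (j + 1) : ℝ) * A j) := by
  classical
  set c := cProd m A B with hc
  set N := Finset.univ.lcm c with hN
  set it : ℕ → Fin m → ℕ := fun r => (Fstep A B t)^[r] (fun _ => 0) with hit
  have hit0 : ∀ j, it 0 j = 0 := fun j => rfl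
  have hitS : ∀ r, it (r + 1) = Fstep A B t (it r) := fun r =>
    Function.iterate_succ_apply' (Fstep A B t) r _
  have hbase : ∀ j : Fin m, 1 ≤ N / c j := fun j =>
    (Nat.one_le_div_iff (cProd_pos A B hA hB j)).mpr
      (Nat.le_of_dvd (N_pos A B hA hB) (Finset.dvd_lcm (Finset.mem_univ _)))
  have hbd : ∀ r j, it r j + 1 ≤ N / c j := by
    intro r
    induction r with
    | zero => intro j; simpa [hit0] using hbase j
    | succ r ih =>
      intro j; rw [hitS]
      exact Fstep_bound A B t hA hB hprod ht0 ht1 ih j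
  have hmono : ∀ r j, it r j ≤ it (r + 1) j := by
    intro r
    induction r with
    | zero => intro j; simp [hit0]
    | succ r ih =>
      rw [hitS, hitS]
      exact fun j => Fstep_mono A B t hA hB ih j
  have hmono' : ∀ r r', r ≤ r' → ∀ j, it r j ≤ it r' j := by
    intro r r' h
    induction r', h using Nat.le_induction with
    | base => exact fun j => le_refl _
    | succ r' hle ih => exact fun j => (ih j).trans (hmono r' j)
  have hS : ∃ R, it R = it (R + 1) := by
    by_contra h
    push_neg at h
    have grow : ∀ r, r ≤ ∑ j, it r j := by
      intro r
      induction r with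
      | zero => exact Nat.zero_le _
      | succ r ih =>
        have hlt : ∑ j, it r j < ∑ j, it (r + 1) j := by
          apply Finset.sum_lt_sum (fun j _ => hmono r j)
          by_contra hall
          push_neg at hall
          exact h r (funext fun j =>
            le_antisymm (hmono r j) (hall j (Finset.mem_univ j)))
        omega
    have hub : ∀ r, ∑ j, it r j + m ≤ ∑ j, N / c j := by
      intro r
      calc ∑ j, it r j + m = ∑ j : Fin m, (it r j + 1) := by
            rw [Finset.sum_add_distrib]; simp
        _ ≤ ∑ j, N / c j := Finset.sum_le_sum fun j _ => hbd r j
    have h1 := grow (∑ j, N / c j + 1)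
    have h2 := hub (∑ j, N / c j + 1)
    have hm : 0 < m := Nat.pos_of_ne_zero (NeZero.ne m)
    omega
  obtain ⟨R, hR⟩ := hS
  refine ⟨it R, (hitS R ▸ hR).symm, hbd R, ?_⟩
  intro cnt hle hne
  set s : Finset ℕ := (Finset.range (R + 1)).filter (fun r => ∀ j, it r j ≤ cnt j)
    with hs
  have h0mem : 0 ∈ s := by
    simp only [hs, Finset.mem_filter, Finset.mem_range]
    exact ⟨Nat.succ_pos R, fun j => by simp [hit0]⟩
  have hsne : s.Nonempty := ⟨0, h0mem⟩
  set r' := s.max' hsne with hr'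
  have hr'mem : r' ∈ s := s.max'_mem hsne
  have hr'le : r' ≤ R := by
    have := (Finset.mem_filter.mp hr'mem).1
    exact Nat.lt_succ_iff.mp (Finset.mem_range.mp this)
  have hr'cnt : ∀ j, it r' j ≤ cnt j := (Finset.mem_filter.mp hr'mem).2
  have hr'ne : r' ≠ R := by
    intro h
    apply hne
    funext j
    exact le_antisymm (hle j) (h ▸ hr'cnt j)
  have hr'lt : r' + 1 ≤ R := by omega
  have hnotmem : r' + 1 ∉ s := by
    intro hmem
    have := s.le_max' _ hmem
    omega
  have hexj : ∃ j, cnt j < it (r' + 1) j := by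
    by_contra hcon
    push_neg at hcon
    exact hnotmem (by
      simp only [hs, Finset.mem_filter, Finset.mem_range]
      exact ⟨by omega, fun j => hcon j⟩)
  obtain ⟨j, hj⟩ := hexj
  refine ⟨j, lt_of_lt_of_le hj (hmono' (r' + 1) R hr'lt j), ?_⟩
  have hBj : (0 : ℝ) < B j := by exact_mod_cast hB j
  have hx0 : (0 : ℝ) ≤ (t j + (it r' (j + 1) : ℝ) * (A j : ℝ)) / (B j : ℝ) :=
    div_nonneg (add_nonneg (ht0 j) (by positivity)) hBj.le
  have hfl : ((cnt j : ℝ) + 1) ≤ (t j + (it r' (j + 1) : ℝ) * (A j : ℝ)) / (B j : ℝ) := by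
    have h1 : cnt j + 1 ≤ it (r' + 1) j := hj
    have h2 : it (r' + 1) j = ⌊(t j + (it r' (j + 1) : ℝ) * (A j : ℝ)) / (B j : ℝ)⌋₊ := by
      rw [hitS]; rfl
    have h5 := Nat.floor_le hx0
    rw [← h2] at h5
    have h6 : ((cnt j : ℝ) + 1) ≤ (it (r' + 1) j : ℝ) := by exact_mod_cast h1
    exact h6.trans h5
  have h4 : ((cnt j : ℝ) + 1) * B j ≤ t j + (it r' (j + 1) : ℝ) * A j := by
    rw [← le_div_iff₀ hBj]; exact hfl
  refine h4.trans ?_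
  have : (it r' (j + 1) : ℝ) ≤ (cnt (j + 1) : ℝ) := by exact_mod_cast hr'cnt (j + 1)
  have hAj : (0 : ℝ) ≤ A j := by positivity
  nlinarith

end

section
variable {m : ℕ} [NeZero m] (A B : Fin m → ℕ) (t : Fin m → ℝ)

/-- The state of the rewriting process when `cnt j` steps have been performed
at each index `j`. -/
noncomputable def oState (cnt : Fin m → ℕ) (j : Fin m) : ℝ :=
  t j + (cnt (j + 1) : ℝ) * (A j : ℝ) - (cnt j : ℝ) * (B j : ℝ)

lemma run_exists (hB : ∀ j, 0 < B j) (ht0 : ∀ j, 0 ≤ t j) (n : Fin m → ℕ)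
    (hfix : Fstep A B t n = n)
    (hprog : ∀ cnt : Fin m → ℕ, (∀ j, cnt j ≤ n j) → cnt ≠ n →
      ∃ j, cnt j < n j ∧ ((cnt j : ℝ) + 1) * B j ≤ t j + (cnt (j + 1) : ℝ) * A j) :
    ∀ d (cnt : Fin m → ℕ), (∀ j, cnt j ≤ n j) → (∑ j, (n j - cnt j)) = d →
    ∃ s : ℕ → Fin m → ℝ, s 0 = oState A B t cnt ∧
      (∀ l < d, CStep m (fun j => (A j : ℝ)) (fun j => (B j : ℝ)) (s l) (s (l + 1))) ∧
      (∀ j, s d j < B j) := by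
  intro d
  induction d with
  | zero =>
    intro cnt hle hsum
    have hcnt : cnt = n := by
      funext j
      have := Finset.sum_eq_zero_iff.mp hsum j (Finset.mem_univ j)
      have := hle j
      omega
    subst hcnt
    refine ⟨fun _ => oState A B t cnt, rfl, fun l hl => absurd hl (Nat.not_lt_zero l), ?_⟩
    intro j
    have hBj : (0 : ℝ) < B j := by exact_mod_cast hB j
    have hnj : cnt j = ⌊(t j + (cnt (j + 1) : ℝ) * (A j : ℝ)) / (B j : ℝ)⌋₊ :=
      (congrFun hfix j).symm
    have hlt := Nat.lt_floor_add_one ((t j + (cnt (j + 1) : ℝ) * (A j : ℝ)) / (B j : ℝ))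
    rw [← hnj] at hlt
    rw [div_lt_iff₀ hBj] at hlt
    unfold oState
    push_cast at hlt ⊢
    linarith
  | succ d ih =>
    intro cnt hle hsum
    have hne : cnt ≠ n := by
      intro h
      subst h
      simp at hsum
    obtain ⟨j, hjlt, hval⟩ := hprog cnt hle hne
    set cnt' := Function.update cnt j (cnt j + 1) with hcnt'
    have hle' : ∀ u, cnt' u ≤ n u := by
      intro u
      rw [hcnt', Function.update_apply]
      split_ifs with h
      · subst h; omega
      · exact hle u
    have hsum' : (∑ u, (n u - cnt' u)) = d := by
      have e1 : ∑ u, (n u - cnt u)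
          = (n j - cnt j) + ∑ u ∈ Finset.univ.erase j, (n u - cnt u) :=
        (Finset.add_sum_erase _ _ (Finset.mem_univ j)).symm
      have e2 : ∑ u, (n u - cnt' u)
          = (n j - cnt' j) + ∑ u ∈ Finset.univ.erase j, (n u - cnt' u) :=
        (Finset.add_sum_erase _ _ (Finset.mem_univ j)).symm
      have e3 : ∑ u ∈ Finset.univ.erase j, (n u - cnt' u)
          = ∑ u ∈ Finset.univ.erase j, (n u - cnt u) := by
        apply Finset.sum_congr rfl
        intro u hu
        rw [hcnt', Function.update_apply, if_neg (Finset.mem_erase.mp hu).1]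
      have e4 : cnt' j = cnt j + 1 := by
        rw [hcnt']; exact Function.update_self j (cnt j + 1) cnt
      rw [e3, e4] at e2
      omega
    obtain ⟨s', hs'0, hs'step, hs'fin⟩ := ih cnt' hle' hsum'
    have hstep0 : CStep m (fun u => (A u : ℝ)) (fun u => (B u : ℝ))
        (oState A B t cnt) (oState A B t cnt') := by
      refine ⟨j, ?_, ?_⟩
      · have hBj : (0 : ℝ) < B j := by exact_mod_cast hB j
        show (B j : ℝ) ≤ oState A B t cnt j
        unfold oState
        linarith
      · intro x
        have hiff : (x = j - 1) ↔ (x + 1 = j) := eq_sub_iff_add_eq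
        unfold oState
        rw [hcnt', Function.update_apply, Function.update_apply]
        by_cases hx2 : x = j <;> by_cases hx1 : x + 1 = j
        · have hx' : x = j - 1 := hiff.mpr hx1
          simp only [if_pos hx1, if_pos hx2, if_pos hx']
          rw [← hx', hx1, hx2]
          push_cast
          ring
        · have hx'n : ¬(x = j - 1) := fun h => hx1 (hiff.mp h)
          simp only [if_neg hx1, if_pos hx2, if_neg hx'n]
          rw [hx2]
          push_cast
          ring
        · have hx' : x = j - 1 := hiff.mpr hx1
          simp only [if_pos hx1, if_neg hx2, if_pos hx']
          rw [← hx', hx1]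
          push_cast
          ring
        · have hx'n : ¬(x = j - 1) := fun h => hx1 (hiff.mp h)
          simp only [if_neg hx1, if_neg hx2, if_neg hx'n]
          push_cast
          ring
    refine ⟨fun l => if l = 0 then oState A B t cnt else s' (l - 1), by simp, ?_, ?_⟩
    · intro l hl
      match l with
      | 0 =>
        show CStep m (fun u => (A u : ℝ)) (fun u => (B u : ℝ)) (oState A B t cnt) (s' 0)
        rw [hs'0]
        exact hstep0
      | Nat.succ l' =>
        show CStep m (fun u => (A u : ℝ)) (fun u => (B u : ℝ)) (s' l') (s' (l' + 1))
        exact hs'step l' (by omega)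
    · intro u
      show s' d u < (B u : ℝ)
      exact hs'fin u
end

section
variable {m : ℕ} [NeZero m] (A B : Fin m → ℕ)

open Fin.CommRing in
lemma fix_lower (hA : ∀ j, 0 < A j) (hB : ∀ j, 0 < B j)
    (hprod : ∏ j, A j = ∏ j, B j) (n : Fin m → ℕ)
    (hfix : Fstep A B (fun j => (A j : ℝ) - 1) n = n) (j : Fin m) :
    Finset.univ.lcm (cProd m A B) / cProd m A B j ≤ n j + 1 := by
  set c := cProd m A B with hc
  set N := Finset.univ.lcm c with hN
  have hcpos : ∀ u, 0 < c u := cProd_pos A B hA hB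
  -- Step 1: (n (u+1) + 1) * A u ≤ (n u + 1) * B u in ℕ
  have step1 : ∀ u : Fin m, (n (u + 1) + 1) * A u ≤ (n u + 1) * B u := by
    intro u
    have hBu : (0 : ℝ) < B u := by exact_mod_cast hB u
    have hnu : n u = ⌊(((A u : ℝ) - 1) + (n (u + 1) : ℝ) * (A u : ℝ)) / (B u : ℝ)⌋₊ :=
      (congrFun hfix u).symm
    have hlt := Nat.lt_floor_add_one ((((A u : ℝ) - 1) + (n (u + 1) : ℝ) * (A u : ℝ)) / (B u : ℝ))
    rw [← hnu, div_lt_iff₀ hBu] at hlt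
    have hreal : ((n (u + 1) + 1) * A u : ℕ) < ((n u + 1) * B u + 1 : ℕ) := by
      have : ((n (u + 1) : ℝ) + 1) * (A u : ℝ) < ((n u : ℝ) + 1) * (B u : ℝ) + 1 := by
        push_cast at hlt
        linarith
      exact_mod_cast (by push_cast; linarith : (((n (u + 1) + 1) * A u : ℕ) : ℝ)
        < (((n u + 1) * B u + 1 : ℕ) : ℝ))
    omega
  -- Step 2: w (u+1) ≤ w u where w u = (n u + 1) * c u
  set w : Fin m → ℕ := fun u => (n u + 1) * c u with hw
  have step2 : ∀ u : Fin m, w (u + 1) ≤ w u := by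
    intro u
    apply Nat.le_of_mul_le_mul_right ?_ (hB u)
    calc w (u + 1) * B u = (n (u + 1) + 1) * (B u * c (u + 1)) := by rw [hw]; ring
      _ = (n (u + 1) + 1) * (A u * c u) := by rw [← key_identity A B hprod u]
      _ = ((n (u + 1) + 1) * A u) * c u := by ring
      _ ≤ ((n u + 1) * B u) * c u := Nat.mul_le_mul_right _ (step1 u)
      _ = w u * B u := by rw [hw]; ring
  -- Step 3: w is constant
  have step3 : ∀ u v : Fin m, w u ≤ w v := by
    have haux : ∀ (v : Fin m) (k : ℕ), w (v + (k : Fin m)) ≤ w v := by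
      intro v k
      induction k with
      | zero => simp
      | succ k ih =>
        have : ((k + 1 : ℕ) : Fin m) = ((k : ℕ) : Fin m) + 1 := by push_cast; ring
        rw [this, ← add_assoc]
        exact (step2 (v + (k : Fin m))).trans ih
    intro u v
    have : u = v + (((u - v : Fin m) : ℕ) : Fin m) := by
      rw [Fin.cast_val_eq_self]
      ring
    rw [this]
    exact haux v _
  have hconst : ∀ u : Fin m, w u = w j := fun u => le_antisymm (step3 u j) (step3 j u)
  -- Step 4: N ∣ w j, hence N ≤ w j
  have hdvd : N ∣ w j := by
    rw [hN]
    apply Finset.lcm_dvd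
    intro u _
    rw [← hconst u, hw]
    exact ⟨n u + 1, by ring⟩
  have hwpos : 0 < w j := Nat.mul_pos (Nat.succ_pos _) (hcpos j)
  have hle : N ≤ (n j + 1) * c j := Nat.le_of_dvd hwpos hdvd
  calc N / c j ≤ ((n j + 1) * c j) / c j := Nat.div_le_div_right hle
    _ = n j + 1 := Nat.mul_div_cancel _ (hcpos j)

end

/-- when all `a_j, b_j` are positive integers, the maximum of
`L(t)` over `t ∈ P` equals `lcm(c_1,…,c_m)·(1/c_1 + ⋯ + 1/c_m) - m`, and it
is attained at `t = (a_1 - 1, …, a_m - 1)`.  Here `L t` is the common length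
of all maximal rewrite sequences from `t`. -/
theorem ohara_max_steps {m : ℕ} [NeZero m] (i : Fin m → ℝ) (A B : Fin m → ℕ)
    (hi : ∀ j, 0 < i j) (hA : ∀ j, 0 < A j) (hB : ∀ j, 0 < B j)
    (hiab : ∀ j, i j * (A j : ℝ) = i (j + 1) * (B (j + 1) : ℝ))
    (L : (Fin m → ℝ) → ℕ)
    (hL : ∀ t, InBox (fun j => (A j : ℝ)) t →
      ∀ (s : ℕ → Fin m → ℝ) (k : ℕ), s 0 = t →
      (∀ l < k, CStep m (fun j => (A j : ℝ)) (fun j => (B j : ℝ))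
        (s l) (s (l + 1))) →
      (∀ j, s k j < (B j : ℝ)) → L t = k) :
    (∀ t, InBox (fun j => (A j : ℝ)) t →
      (L t : ℝ) ≤ ((Finset.univ.lcm (cProd m A B) : ℕ) : ℝ) *
        (∑ j, ((cProd m A B j : ℝ))⁻¹) - m) ∧
    InBox (fun j => (A j : ℝ)) (fun j => (A j : ℝ) - 1) ∧
    (L (fun j => (A j : ℝ) - 1) : ℝ) =
      ((Finset.univ.lcm (cProd m A B) : ℕ) : ℝ) *
        (∑ j, ((cProd m A B j : ℝ))⁻¹) - m := by
  have hprod := prod_A_eq_prod_B A B i hi hiab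
  set c := cProd m A B with hc
  set N := Finset.univ.lcm c with hN
  have hcpos : ∀ u, 0 < c u := cProd_pos A B hA hB
  have main : ∀ t, InBox (fun j => (A j : ℝ)) t → ∃ n : Fin m → ℕ,
      Fstep A B t n = n ∧ (∀ j, n j + 1 ≤ N / c j) ∧ L t = ∑ j, n j := by
    intro t ht
    have ht0 : ∀ j, 0 ≤ t j := fun j => (ht j).1
    have ht1 : ∀ j, t j < A j := fun j => (ht j).2
    obtain ⟨n, hfix, hbd, hprog⟩ := exists_fix A B t hA hB hprod ht0 ht1
    obtain ⟨s, hs0, hsstep, hsfin⟩ := run_exists A B t hB ht0 n hfix hprog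
      (∑ j, n j) (fun _ => 0) (fun _ => Nat.zero_le _) (by simp)
    have hs0' : s 0 = t := by
      rw [hs0]; funext u; unfold oState; simp
    exact ⟨n, hfix, hbd, hL t ht s (∑ j, n j) hs0' hsstep hsfin⟩
  have hcast : ((N : ℕ) : ℝ) * (∑ j, ((c j : ℝ))⁻¹) = ∑ j, ((N / c j : ℕ) : ℝ) := by
    rw [Finset.mul_sum]
    apply Finset.sum_congr rfl
    intro j _
    have hd : c j ∣ N := Finset.dvd_lcm (Finset.mem_univ _)
    rw [Nat.cast_div hd (by exact_mod_cast (hcpos j).ne')]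
    rw [div_eq_mul_inv]
  have hsumle : ∀ n : Fin m → ℕ, (∀ j, n j + 1 ≤ N / c j) →
      (∑ j, n j) + m ≤ ∑ j, N / c j := by
    intro n hbd
    calc (∑ j, n j) + m = ∑ j : Fin m, (n j + 1) := by
          rw [Finset.sum_add_distrib]; simp
      _ ≤ ∑ j, N / c j := Finset.sum_le_sum fun j _ => hbd j
  refine ⟨?_, ?_, ?_⟩
  · intro t ht
    obtain ⟨n, hfix, hbd, hLt⟩ := main t ht
    rw [hLt, hcast]
    have h1 := hsumle n hbd
    have h2 : ((∑ j, n j : ℕ) : ℝ) + m ≤ ∑ j, ((N / c j : ℕ) : ℝ) := by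
      exact_mod_cast h1
    linarith
  · intro j
    have h1 : (1 : ℝ) ≤ A j := by exact_mod_cast hA j
    exact ⟨by show (0:ℝ) ≤ (A j : ℝ) - 1; linarith,
      by show (A j : ℝ) - 1 < (A j : ℝ); linarith⟩
  · have hbox : InBox (fun j => (A j : ℝ)) (fun j => (A j : ℝ) - 1) := by
      intro j
      have h1 : (1 : ℝ) ≤ A j := by exact_mod_cast hA j
      exact ⟨by show (0:ℝ) ≤ (A j : ℝ) - 1; linarith,
        by show (A j : ℝ) - 1 < (A j : ℝ); linarith⟩
    obtain ⟨n, hfix, hbd, hLt⟩ := main _ hbox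
    have hlow : ∀ j, N / c j ≤ n j + 1 := fix_lower A B hA hB hprod n hfix
    have heq : ∀ j, n j + 1 = N / c j := fun j => le_antisymm (hbd j) (hlow j)
    rw [hLt, hcast]
    have h1 : (∑ j, n j) + m = ∑ j, N / c j := by
      calc (∑ j, n j) + m = ∑ j : Fin m, (n j + 1) := by
            rw [Finset.sum_add_distrib]; simp
        _ = ∑ j, N / c j := Finset.sum_congr rfl fun j _ => heq j
    have h2 : ((∑ j, n j : ℕ) : ℝ) + m = ∑ j, ((N / c j : ℕ) : ℝ) := by
      exact_mod_cast h1
    linarith
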